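/- Let n ≥ 2 and let F be an F-matrix of size 2n−2. Then the column sums of the associated E-matrix satisfy: the sum over i = 0, …, 2n−3 of E_{i,0} equals 2, and for each 1 ≤ j ≤ 2n−3 the sum over i = j, …, 2n−3 of E_{i,j} equals 0 or 2. -/
import Mathlib


/-- An **F**-matrix of size `2n-2` (for a fully heterochronous ranked tree shape with
`n` leaves), modeled as a function `ℤ → ℤ → ℤ` of nonnegative integer entries that
vanishes outside the index range `0 ≤ j ≤ i ≤ 2n-3`. -/
structure IsFMatrix (n : ℕ) (F : ℤ → ℤ → ℤ) : Prop where
  nonneg : ∀ i j : ℤ, 0 ≤ F i j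
  zero_outside : ∀ i j : ℤ, j < 0 ∨ i < j ∨ 2 * (n : ℤ) - 3 < i → F i j = 0
  row_mono : ∀ i j : ℤ, 1 ≤ j → j ≤ i → i ≤ 2 * (n : ℤ) - 3 → F i (j - 1) ≤ F i j
  col_lb : ∀ i j : ℤ, 0 ≤ j → j < i → i ≤ 2 * (n : ℤ) - 3 → F (i - 1) j - 1 ≤ F i j
  col_ub : ∀ i j : ℤ, 0 ≤ j → j < i → i ≤ 2 * (n : ℤ) - 3 → F i j ≤ F (i - 1) j
  diag_pos : ∀ i : ℤ, 0 ≤ i → i ≤ 2 * (n : ℤ) - 3 → 0 < F i i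
  diag_first : F 0 0 = 2
  diag_step : ∀ i : ℤ, 0 < i → i < 2 * (n : ℤ) - 3 →
      F i i = F (i - 1) (i - 1) + 1 ∨ F i i = F (i - 1) (i - 1) - 1
  diag_last : F (2 * (n : ℤ) - 3) (2 * (n : ℤ) - 3) = 1
  subdiag : ∀ i : ℤ, 1 ≤ i → i ≤ 2 * (n : ℤ) - 3 → F i (i - 1) = F (i - 1) (i - 1) - 1
  inner_lb : ∀ i j : ℤ, 2 ≤ i → i ≤ 2 * (n : ℤ) - 3 → 1 ≤ j → j ≤ i - 2 →
      F i (j - 1) + F (i - 1) j - F (i - 1) (j - 1) - 1 ≤ F i j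
  inner_ub : ∀ i j : ℤ, 2 ≤ i → i ≤ 2 * (n : ℤ) - 3 → 1 ≤ j → j ≤ i - 2 →
      F i j ≤ F i (j - 1) + F (i - 1) j - F (i - 1) (j - 1)

/-- The **D**-matrix associated to an **F**-matrix: `D i j = F i j - F i (j-1)`. -/
def Dmat (F : ℤ → ℤ → ℤ) (i j : ℤ) : ℤ := F i j - F i (j - 1)

/-- The **E**-matrix associated to an **F**-matrix: `E i j = D i j - D (i+1) j`. -/
def Emat (F : ℤ → ℤ → ℤ) (i j : ℤ) : ℤ := Dmat F i j - Dmat F (i + 1) j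

lemma telescope_Icc (g : ℤ → ℤ) (a : ℤ) :
    ∀ b, a ≤ b → ∑ i ∈ Finset.Icc a b, (g i - g (i + 1)) = g a - g (b + 1) := by
  refine Int.le_induction ?_ ?_
  · simp
  · intro b hb ih
    have hins : Finset.Icc a (b + 1) = insert (b + 1) (Finset.Icc a b) := by
      ext x; simp only [Finset.mem_insert, Finset.mem_Icc]; omega
    rw [hins, Finset.sum_insert (by simp), ih]
    ring

lemma diag_parity (n : ℕ) (F : ℤ → ℤ → ℤ) (hF : IsFMatrix n F) :
    ∀ k : ℕ, (k : ℤ) < 2 * (n : ℤ) - 3 → (F k k + k) % 2 = 0 := by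
  intro k
  induction k with
  | zero => intro _; simp [hF.diag_first]
  | succ k ih =>
    intro hk
    have hk' : (k : ℤ) < 2 * (n : ℤ) - 3 := by push_cast at hk ⊢; omega
    have h0 := ih hk'
    have hstep := hF.diag_step (k + 1) (by positivity) (by push_cast at hk ⊢; omega)
    have : ((k : ℤ) + 1) - 1 = k := by ring
    rw [this] at hstep
    push_cast
    push_cast at h0
    rcases hstep with h | h <;> omega

/-- column 0 of the associated E-matrix sums to 2, and every other
column sums to 0 or 2. -/
theorem emat_col_sums (n : ℕ) (hn : 2 ≤ n) (F : ℤ → ℤ → ℤ)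
    (hF : IsFMatrix n F) :
    (∑ i ∈ Finset.Icc (0 : ℤ) (2 * (n : ℤ) - 3), Emat F i 0 = 2) ∧
    ∀ j : ℤ, 1 ≤ j → j ≤ 2 * (n : ℤ) - 3 →
      (∑ i ∈ Finset.Icc j (2 * (n : ℤ) - 3), Emat F i j = 0 ∨
       ∑ i ∈ Finset.Icc j (2 * (n : ℤ) - 3), Emat F i j = 2) := by
  set N : ℤ := 2 * (n : ℤ) - 3 with hN
  have hN1 : 1 ≤ N := by omega
  -- column sum telescopes to `Dmat F j j`
  have key : ∀ j : ℤ, 0 ≤ j → j ≤ N →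
      ∑ i ∈ Finset.Icc j N, Emat F i j = Dmat F j j := by
    intro j hj0 hjN
    have := telescope_Icc (fun i => Dmat F i j) j N hjN
    simp only [Emat]
    rw [this]
    have z1 : F (N + 1) j = 0 := hF.zero_outside _ _ (by omega)
    have z2 : F (N + 1) (j - 1) = 0 := hF.zero_outside _ _ (by omega)
    simp [Dmat, z1, z2]
  constructor
  · rw [key 0 le_rfl (by omega)]
    have z : F 0 (-1) = 0 := hF.zero_outside _ _ (by omega)
    simp [Dmat, z, hF.diag_first]
  · intro j hj1 hjN
    rw [key j (by omega) hjN]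
    have hsub := hF.subdiag j hj1 hjN
    rcases lt_or_eq_of_le hjN with hlt | heq
    · rcases hF.diag_step j (by omega) hlt with h | h
      · right; simp [Dmat, h, hsub]
      · left; simp [Dmat, h, hsub]
    · -- j = N : need F (N-1) (N-1) = 2
      have hlast : F j j = 1 := by rw [heq, hN]; exact hF.diag_last
      have hpos : 0 < F (j - 1) (j - 1) := hF.diag_pos _ (by omega) (by omega)
      have hrm : F j (j - 1) ≤ F j j := hF.row_mono j j hj1 le_rfl hjN
      have hub : F (j - 1) (j - 1) ≤ 2 := by omega
      by_cases hj2 : j = 1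
      · left
        have h2 : F (j - 1) (j - 1) = 2 := by
          rw [hj2]; norm_num [hF.diag_first]
        simp [Dmat, hlast, hsub, h2]
      · obtain ⟨k, hk⟩ : ∃ k : ℕ, (k : ℤ) = j - 1 := ⟨(j - 1).toNat, by omega⟩
        have hpar := diag_parity n F hF k (by omega)
        rw [hk] at hpar
        have hjodd : j % 2 = 1 := by omega
        have h2 : F (j - 1) (j - 1) = 2 := by omega
        left
        simp [Dmat, hlast, hsub, h2]
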